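/- Let m_L = (a_{1L}, a_{2L}, b_L, c_L) and m_R = (a_{1R}, a_{2R}, b_R, c_R) be charge-1 ADHM data (scalars a's, b's ∈ ℂ^r, c's ∈ ℂ^r, with b_L·c_L = 0 and b_R·c_R = 0) with a_{1L} ≠ a_{1R}. Define the 2×2 glued data m_L ⊞_0 m_R by a1 = diag(a_{1L}, a_{1R}), a2 = [[a_{2L}, (b_L·c_R)/(a_{1R}−a_{1L})],[(b_R·c_L)/(a_{1L}−a_{1R}), a_{2R}]], b the 2×r matrix with rows b_L, b_R, c the r×2 matrix with columns c_L, c_R. Then [a1, a2] + bc = 0. -/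
import Mathlib


open Matrix

/-- ADHM integrability of the glued charge-2 data `m_L ⊞_0 m_R`: given charge-1 ADHM data
`(a_{1L}, a_{2L}, b_L, c_L)` and `(a_{1R}, a_{2R}, b_R, c_R)` with `b_L·c_L = 0`,
`b_R·c_R = 0` and `a_{1L} ≠ a_{1R}`, the glued configuration satisfies
`[a1, a2] + bc = 0`. -/
theorem stmt16 {r : ℕ} (a1L a2L a1R a2R : ℂ) (hne : a1L ≠ a1R)
    (bL cL bR cR : Fin r → ℂ) (hL : bL ⬝ᵥ cL = 0) (hR : bR ⬝ᵥ cR = 0) :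
    let a1 : Matrix (Fin 2) (Fin 2) ℂ := !![a1L, 0; 0, a1R]
    let a2 : Matrix (Fin 2) (Fin 2) ℂ :=
      !![a2L, (bL ⬝ᵥ cR) / (a1R - a1L);
         (bR ⬝ᵥ cL) / (a1L - a1R), a2R]
    let b : Matrix (Fin 2) (Fin r) ℂ := Matrix.of ![bL, bR]
    let c : Matrix (Fin r) (Fin 2) ℂ := (Matrix.of ![cL, cR])ᵀ
    a1 * a2 - a2 * a1 + b * c = 0 := by
  intro a1 a2 b c
  have h1 : a1R - a1L ≠ 0 := sub_ne_zero.mpr (Ne.symm hne)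
  have h2 : a1L - a1R ≠ 0 := sub_ne_zero.mpr hne
  simp only [dotProduct] at hL hR
  ext i j
  fin_cases i <;> fin_cases j <;>
    simp [a1, a2, b, c, hL, hR, Matrix.mul_apply, Fin.sum_univ_two, dotProduct,
          Matrix.vecMul, Matrix.transpose_apply, Matrix.vecHead] <;>
    (try field_simp) <;> ring
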